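/- Let F be a field of characteristic zero, V a finite-dimensional F-vector space, A an endomorphism of V, b ∈ V and c ∈ V* a linear form. Then d_r(A,b,c) = 0 for every integer r ≥ 1 if and only if c(A^i(b)) = 0 for every integer i ≥ 0. (This identifies the closed stratum of triples with all invariants c(A^i b) zero with the common vanishing locus of all the functions d_r.) -/

import Mathlib

-- Auxiliary lemma: a sequence whose shifts eventually fall into the span of earlier
-- shifts, and all whose Hankel determinants vanish, is identically zero.
lemma hankel_aux {F : Type*} [Field F] (a : ℕ → F)
    (hex : ∃ n : ℕ, (fun k => a (n + k)) ∈
      Submodule.span F (Set.range fun m : Fin n => fun k => a (↑m + k)))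
    (hd : ∀ r : ℕ, 1 ≤ r →
      (Matrix.of fun i j : Fin r => a ((i : ℕ) + (j : ℕ))).det = 0) :
    ∀ i : ℕ, a i = 0 := by
  classical
  set r : ℕ → (ℕ → F) := fun n k => a (n + k) with hr
  have hex' : ∃ n : ℕ, r n ∈ Submodule.span F (Set.range fun m : Fin n => r ↑m) := hex
  set N := Nat.find hex' with hNdef
  have hPN : r N ∈ Submodule.span F (Set.range fun m : Fin N => r ↑m) := Nat.find_spec hex'
  by_cases hN0 : N = 0
  · rw [hN0] at hPN
    have hr0 : r 0 = 0 := by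
      simpa [Set.range_eq_empty, Submodule.span_empty, Submodule.mem_bot] using hPN
    intro i
    have := congrFun hr0 i
    simpa [hr] using this
  · exfalso
    have hdet := hd N (Nat.one_le_iff_ne_zero.mpr hN0)
    rw [← Matrix.exists_mulVec_eq_zero_iff] at hdet
    obtain ⟨lam, hlamne, hlam⟩ := hdet
    obtain ⟨cm, hcm⟩ := (Submodule.mem_span_range_iff_exists_fun F).mp hPN
    -- recurrence
    have hrec : ∀ k : ℕ, a (N + k) = ∑ m : Fin N, cm m * a (↑m + k) := by
      intro k
      have := congrFun hcm k
      simp only [Finset.sum_apply, Pi.smul_apply, smul_eq_mul, hr] at this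
      exact this.symm
    set s : ℕ → F := fun i => ∑ j : Fin N, lam j * a (i + ↑j) with hs
    have hs0 : ∀ i : Fin N, s ↑i = 0 := by
      intro i
      have := congrFun hlam i
      simp only [Matrix.mulVec, dotProduct, Matrix.of_apply, Pi.zero_apply] at this
      simp only [hs]
      rw [← this]
      exact Finset.sum_congr rfl fun j _ => mul_comm _ _
    have hsz : ∀ i, s i = 0 := by
      intro i
      induction i using Nat.strong_induction_on with
      | _ i ih =>
        by_cases hi : i < N
        · exact hs0 ⟨i, hi⟩
        · push_neg at hi
          have key : ∀ m j : Fin N,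
              lam j * (cm m * a (↑m + (i - N + ↑j))) =
              cm m * (lam j * a ((i - N + ↑m) + ↑j)) := by
            intro m j
            have h : (↑m : ℕ) + (i - N + ↑j) = (i - N + ↑m) + ↑j := by omega
            rw [h]; ring
          have hstep : s i = ∑ m : Fin N, cm m * s (i - N + ↑m) := by
            calc s i = ∑ j : Fin N, lam j * a (N + (i - N + ↑j)) := by
                  refine Finset.sum_congr rfl fun j _ => ?_
                  have h : i + (j : ℕ) = N + (i - N + ↑j) := by omega
                  rw [h]
              _ = ∑ j : Fin N, lam j * ∑ m : Fin N, cm m * a (↑m + (i - N + ↑j)) := by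
                  refine Finset.sum_congr rfl fun j _ => ?_
                  rw [hrec]
              _ = ∑ j : Fin N, ∑ m : Fin N, lam j * (cm m * a (↑m + (i - N + ↑j))) := by
                  simp_rw [Finset.mul_sum]
              _ = ∑ m : Fin N, ∑ j : Fin N, cm m * (lam j * a ((i - N + ↑m) + ↑j)) := by
                  rw [Finset.sum_comm]
                  exact Finset.sum_congr rfl fun m _ =>
                    Finset.sum_congr rfl fun j _ => key m j
              _ = ∑ m : Fin N, cm m * s (i - N + ↑m) := by
                  simp_rw [← Finset.mul_sum]
                  rfl
          rw [hstep]
          refine Finset.sum_eq_zero fun m _ => ?_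
          rw [ih (i - N + ↑m) (by omega), mul_zero]
    have hrz : ∑ j : Fin N, lam j • r ↑j = (0 : ℕ → F) := by
      funext k
      have := hsz k
      simp only [Finset.sum_apply, Pi.smul_apply, smul_eq_mul, Pi.zero_apply, hr]
      rw [← this]
      exact Finset.sum_congr rfl fun j _ => by rw [Nat.add_comm]
    -- maximal index with nonzero coefficient
    have hTne : (Finset.univ.filter fun j : Fin N => lam j ≠ 0).Nonempty := by
      obtain ⟨j, hj⟩ := Function.ne_iff.mp hlamne
      exact ⟨j, Finset.mem_filter.mpr ⟨Finset.mem_univ _, hj⟩⟩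
    set m := (Finset.univ.filter fun j : Fin N => lam j ≠ 0).max' hTne with hm
    have hmmem := (Finset.univ.filter fun j : Fin N => lam j ≠ 0).max'_mem hTne
    have hlm : lam m ≠ 0 := (Finset.mem_filter.mp hmmem).2
    have hmax : ∀ j : Fin N, lam j ≠ 0 → j ≤ m := fun j hj =>
      Finset.le_max' _ j (Finset.mem_filter.mpr ⟨Finset.mem_univ _, hj⟩)
    have h1 : lam m • r ↑m = - ∑ j ∈ Finset.univ.erase m, lam j • r ↑j := by
      rw [eq_neg_iff_add_eq_zero]
      rw [Finset.add_sum_erase Finset.univ (fun j : Fin N => lam j • r ↑j) (Finset.mem_univ m)]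
      exact hrz
    have hsum : ∑ j ∈ Finset.univ.erase m, lam j • r ↑j ∈
        Submodule.span F (Set.range fun t : Fin ↑m => r ↑t) := by
      refine Submodule.sum_mem _ fun j hj => ?_
      by_cases hlj : lam j = 0
      · simp [hlj]
      · refine Submodule.smul_mem _ _ (Submodule.subset_span ?_)
        have hjm : (↑j : ℕ) < ↑m := by
          have h2 := hmax j hlj
          have h3 : j ≠ m := Finset.ne_of_mem_erase hj
          have h4 : (↑j : ℕ) ≤ ↑m := h2
          have h5 : (↑j : ℕ) ≠ ↑m := fun h => h3 (Fin.val_injective h)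
          omega
        exact ⟨⟨↑j, hjm⟩, rfl⟩
    have hmem : r ↑m ∈ Submodule.span F (Set.range fun t : Fin ↑m => r ↑t) := by
      have h2 : r ↑m = (lam m)⁻¹ • (- ∑ j ∈ Finset.univ.erase m, lam j • r ↑j) := by
        rw [← h1, smul_smul, inv_mul_cancel₀ hlm, one_smul]
      rw [h2]
      exact Submodule.smul_mem _ _ (Submodule.neg_mem _ hsum)
    exact Nat.find_min hex' m.isLt hmem

/-- For a triple `(A, b, c)` consisting of an endomorphism `A` of a
finite-dimensional vector space `V` over a field `F` of characteristic zero, a vector `b ∈ V`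
and a linear form `c ∈ V*`, all the invariants
`d_r(A,b,c) = det ((c (A^{i+j} b))_{0 ≤ i,j ≤ r-1})`, `r ≥ 1`, vanish if and only if
`c (A^i b) = 0` for every `i ≥ 0`. -/
theorem stmt_0 (F : Type*) [Field F] [CharZero F]
    (V : Type*) [AddCommGroup V] [Module F V] [FiniteDimensional F V]
    (A : V →ₗ[F] V) (b : V) (c : V →ₗ[F] F) :
    (∀ r : ℕ, 1 ≤ r →
        (Matrix.of fun i j : Fin r => c ((A ^ ((i : ℕ) + (j : ℕ))) b)).det = 0) ↔
      ∀ i : ℕ, c ((A ^ i) b) = 0 := by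
  classical
  constructor
  · intro hd
    set a : ℕ → F := fun i => c ((A ^ i) b) with ha
    set φ : V →ₗ[F] (ℕ → F) := LinearMap.pi (fun k => c ∘ₗ (A ^ k)) with hφ
    have hrφ : ∀ n : ℕ, (fun k => a (n + k)) = φ ((A ^ n) b) := by
      intro n
      funext k
      simp only [ha, hφ, LinearMap.pi_apply, LinearMap.comp_apply]
      congr 1
      rw [Nat.add_comm n k, pow_add, Module.End.mul_apply]
    have hex : ∃ n : ℕ, (fun k => a (n + k)) ∈
        Submodule.span F (Set.range fun m : Fin n => fun k => a (↑m + k)) := by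
      by_contra hno
      push_neg at hno
      have hind : ∀ k : ℕ, LinearIndependent F (fun i : Fin k => fun t => a (↑i + t)) := by
        intro k
        induction k with
        | zero => exact linearIndependent_empty_type
        | succ k ih =>
          have heq : (fun i : Fin (k + 1) => fun t => a (↑i + t)) =
              Fin.snoc (fun i : Fin k => fun t => a (↑i + t)) (fun t => a (k + t)) := by
            funext i
            refine Fin.lastCases ?_ ?_ i
            · simp
            · intro j
              simp
          rw [heq, linearIndependent_fin_snoc]
          exact ⟨ih, hno k⟩
      set d := Module.finrank F V with hd'
      have h1 : LinearIndependent F (fun i : Fin (d + 1) => (A ^ (i : ℕ)) b) := by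
        apply LinearIndependent.of_comp φ
        have h2 := hind (d + 1)
        have h3 : (φ ∘ fun i : Fin (d + 1) => (A ^ (i : ℕ)) b) =
            fun i : Fin (d + 1) => fun t => a (↑i + t) := by
          funext i
          exact (hrφ ↑i).symm
        rw [h3]
        exact h2
      have h2 := h1.fintype_card_le_finrank
      simp only [Fintype.card_fin] at h2
      omega
    have := hankel_aux a hex hd
    exact this
  · intro h r hr
    have hz : (Matrix.of fun i j : Fin r => c ((A ^ ((i : ℕ) + (j : ℕ))) b)) = 0 := by
      ext i j
      simp [h]
    rw [hz]
    haveI : Nonempty (Fin r) := ⟨⟨0, hr⟩⟩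
    exact Matrix.det_zero
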